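/- Let c > 1, A = (c−1)/24, and let h* be a real number with 0 ≤ h* ≤ A. Let N ∈ ℕ and ω_0, ..., ω_N ∈ ℝ, and define the derivative functional ω[f] = Σ_{m=0}^N ω_m · (d/dz)^m [f(e^z)] evaluated at z = 0. If ω[t ↦ χ̂_h(1/t)] ≤ 0 for every h ≥ h*, then ω[χ̂_vac] ≤ 0. In particular, no derivative functional of finite order can simultaneously satisfy the positivity condition ω[t ↦ χ̂_h(1/t)] ≤ 0 for all h ≥ h* and the normalization ω[χ̂_vac] = 1 when h* ≤ (c−1)/24; hence no upper bound on the boundary entropy can be derived by this method unless the boundary gap exceeds (c−1)/24. -/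

import Mathlib

open Real

/-- Reduced Virasoro character `χ̂_h(t) = t^{1/4} · exp(−2πt(h−A))`. -/
noncomputable def chiHat (A h t : ℝ) : ℝ :=
  t ^ ((1 : ℝ) / 4) * Real.exp (-(2 * Real.pi * t * (h - A)))

/-- Reduced vacuum character `χ̂_vac(t) = t^{1/4} · exp(2πtA) · (1 − exp(−2πt))`. -/
noncomputable def chiVac (A t : ℝ) : ℝ :=
  t ^ ((1 : ℝ) / 4) * Real.exp (2 * Real.pi * t * A) * (1 - Real.exp (-(2 * Real.pi * t)))

/-- The derivative functional of order `N` with coefficients `w 0, …, w N`,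
`ω[f] = Σ_{m=0}^N w_m · (d/dz)^m [f(e^z)] |_{z=0}`. -/
noncomputable def derivFunctional (N : ℕ) (w : ℕ → ℝ) (f : ℝ → ℝ) : ℝ :=
  ∑ m ∈ Finset.range (N + 1), w m * iteratedDeriv m (fun z : ℝ => f (Real.exp z)) 0

open MeasureTheory Filter

namespace NoUB

/-- Polynomials controlling derivatives of `exp (-(z/4) - c·e^{-z})`. -/
noncomputable def Pm : ℕ → Polynomial ℝ
  | 0 => 1
  | (m+1) => (Polynomial.X - Polynomial.C (1/4)) * Pm m - Polynomial.X * (Pm m).derivative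

/-- `gg c z = exp (-(z/4) - c e^{-z})`, i.e. `χ̂_h(1/e^z)` with `c = 2π(h-A)`. -/
noncomputable def gg (cc z : ℝ) : ℝ := Real.exp (-(z/4) - cc * Real.exp (-z))

lemma hasDerivAt_gg (m : ℕ) (cc z : ℝ) :
    HasDerivAt (fun z => (Pm m).eval (cc * Real.exp (-z)) * gg cc z)
      ((Pm (m+1)).eval (cc * Real.exp (-z)) * gg cc z) z := by
  have h1 : HasDerivAt (fun z : ℝ => cc * Real.exp (-z)) (-(cc * Real.exp (-z))) z := by
    simpa [mul_comm] using ((Real.hasDerivAt_exp (-z)).comp z (hasDerivAt_neg z)).const_mul cc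
  have h2 : HasDerivAt (fun z : ℝ => -(z/4) - cc * Real.exp (-z))
      (-(1/4) - -(cc * Real.exp (-z))) z := by
    have := ((hasDerivAt_id z).div_const 4).neg
    exact this.sub h1
  have h3 : HasDerivAt (gg cc) ((-(1/4) - -(cc * Real.exp (-z))) * gg cc z) z := by
    have := (Real.hasDerivAt_exp (-(z/4) - cc * Real.exp (-z))).comp z h2
    rw [show gg cc = rexp ∘ fun z => -(z/4) - cc * Real.exp (-z) from rfl]
    simpa [gg, mul_comm] using this
  have h4 : HasDerivAt (fun z : ℝ => (Pm m).eval (cc * Real.exp (-z)))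
      ((Pm m).derivative.eval (cc * Real.exp (-z)) * -(cc * Real.exp (-z))) z :=
    (Polynomial.hasDerivAt (Pm m) _).comp z h1
  have h5 := h4.mul h3
  convert h5 using 1
  show (Pm (m+1)).eval (cc * Real.exp (-z)) * gg cc z = _
  rw [show Pm (m+1) = (Polynomial.X - Polynomial.C (1/4)) * Pm m
    - Polynomial.X * (Pm m).derivative from rfl]
  simp only [Polynomial.eval_mul, Polynomial.eval_sub, Polynomial.eval_X, Polynomial.eval_C]
  ring
  all_goals rfl

lemma iteratedDeriv_gg (m : ℕ) (cc : ℝ) :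
    ∀ z : ℝ, iteratedDeriv m (gg cc) z = (Pm m).eval (cc * Real.exp (-z)) * gg cc z := by
  induction m with
  | zero => intro z; simp [Pm]
  | succ m ih =>
    intro z
    rw [iteratedDeriv_succ, funext ih]
    exact (hasDerivAt_gg m cc z).deriv

lemma poly_bound (p : Polynomial ℝ) : ∃ C : ℝ, 0 ≤ C ∧
    ∀ x : ℝ, |p.eval x| ≤ C * (1 + |x|) ^ p.natDegree := by
  refine ⟨∑ i ∈ Finset.range (p.natDegree + 1), |p.coeff i|,
    Finset.sum_nonneg fun i _ => abs_nonneg _, fun x => ?_⟩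
  rw [Polynomial.eval_eq_sum_range, Finset.sum_mul]
  refine (Finset.abs_sum_le_sum_abs _ _).trans (Finset.sum_le_sum fun i hi => ?_)
  rw [abs_mul, abs_pow]
  refine mul_le_mul_of_nonneg_left ?_ (abs_nonneg _)
  calc |x| ^ i ≤ (1 + |x|) ^ i := by
        exact pow_le_pow_left₀ (abs_nonneg x) (by linarith [abs_nonneg x]) i
    _ ≤ (1 + |x|) ^ p.natDegree := by
        exact pow_le_pow_right₀ (by linarith [abs_nonneg x])
          (Nat.lt_succ_iff.mp (Finset.mem_range.mp hi))


lemma integrable_pow_gauss (n : ℕ) {β : ℝ} (hβ : 0 < β) :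
    Integrable fun u : ℝ => u ^ n * Real.exp (-β * u ^ 2) := by
  have h := integrable_rpow_mul_exp_neg_mul_sq hβ
    (s := (n : ℝ)) (by exact_mod_cast neg_one_lt_zero.trans_le (Nat.cast_nonneg n))
  simpa [Real.rpow_natCast] using h

lemma integrable_poly_gauss (p : Polynomial ℝ) {β : ℝ} (hβ : 0 < β) :
    Integrable fun u : ℝ => p.eval u * Real.exp (-β * u ^ 2) := by
  have : (fun u : ℝ => p.eval u * Real.exp (-β * u ^ 2))
      = fun u : ℝ => ∑ i ∈ Finset.range (p.natDegree + 1),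
        p.coeff i * (u ^ i * Real.exp (-β * u ^ 2)) := by
    funext u
    rw [Polynomial.eval_eq_sum_range, Finset.sum_mul]
    simp [mul_assoc]
  rw [this]
  exact integrable_finset_sum _ fun i _ => (integrable_pow_gauss i hβ).const_mul _

lemma integrable_poly_gauss_exp (p : Polynomial ℝ) {β : ℝ} (hβ : 0 < β) (r : ℝ) :
    Integrable fun u : ℝ => p.eval u * Real.exp (-β * u ^ 2 + r * u) := by
  set s : ℝ := r / (2 * β) with hs
  have key : ∀ u : ℝ, -β * u ^ 2 + r * u = -β * (u - s) ^ 2 + r ^ 2 / (4 * β) := by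
    intro u; rw [hs]; field_simp; ring
  have h2 : (fun u : ℝ => p.eval u * Real.exp (-β * u ^ 2 + r * u))
      = fun u : ℝ => ((p.comp (Polynomial.X + Polynomial.C s)).eval (u - s)
          * Real.exp (-β * (u - s) ^ 2)) * Real.exp (r ^ 2 / (4 * β)) := by
    funext u
    rw [Polynomial.eval_comp]
    simp only [Polynomial.eval_add, Polynomial.eval_X, Polynomial.eval_C, sub_add_cancel]
    rw [key u, Real.exp_add]; ring
  rw [h2]
  exact ((integrable_poly_gauss _ hβ).comp_sub_right s).mul_const _

lemma integrable_gauss_exp {β : ℝ} (hβ : 0 < β) (r : ℝ) :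
    Integrable fun u : ℝ => Real.exp (-β * u ^ 2 + r * u) := by
  simpa using integrable_poly_gauss_exp 1 hβ r

lemma integral_gauss_exp {β : ℝ} (hβ : 0 < β) (r : ℝ) :
    ∫ u : ℝ, Real.exp (-β * u ^ 2 + r * u) = Real.sqrt (π / β) * Real.exp (r ^ 2 / (4 * β)) := by
  set s : ℝ := r / (2 * β) with hs
  have key : ∀ u : ℝ, -β * u ^ 2 + r * u = -β * (u + -s) ^ 2 + r ^ 2 / (4 * β) := by
    intro u; rw [hs]; field_simp; ring
  simp_rw [key, Real.exp_add]
  rw [integral_mul_const,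
    integral_add_right_eq_self (fun a : ℝ => Real.exp (-β * a ^ 2)) (-s),
    integral_gaussian]

lemma integral_gauss_cosh {β : ℝ} (hβ : 0 < β) (r : ℝ) :
    ∫ u : ℝ, Real.exp (-β * u ^ 2) * Real.cosh (r * u)
      = Real.sqrt (π / β) * Real.exp (r ^ 2 / (4 * β)) := by
  have h1 : (fun u : ℝ => Real.exp (-β * u ^ 2) * Real.cosh (r * u))
      = fun u : ℝ => (Real.exp (-β * u ^ 2 + r * u) + Real.exp (-β * u ^ 2 + -r * u)) / 2 := by
    funext u
    rw [Real.cosh_eq, Real.exp_add, Real.exp_add]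
    ring_nf
  rw [h1]
  rw [integral_div, integral_add (integrable_gauss_exp hβ r) (integrable_gauss_exp hβ (-r)),
    integral_gauss_exp hβ r, integral_gauss_exp hβ (-r)]
  ring_nf

lemma integrable_gauss_cosh {β : ℝ} (hβ : 0 < β) (r : ℝ) :
    Integrable fun u : ℝ => Real.exp (-β * u ^ 2) * Real.cosh (r * u) := by
  have h1 : (fun u : ℝ => Real.exp (-β * u ^ 2) * Real.cosh (r * u))
      = fun u : ℝ => (Real.exp (-β * u ^ 2 + r * u) + Real.exp (-β * u ^ 2 + -r * u)) / 2 := by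
    funext u
    rw [Real.cosh_eq, Real.exp_add, Real.exp_add]
    ring_nf
  rw [h1]
  exact ((integrable_gauss_exp hβ _).add (integrable_gauss_exp hβ _)).div_const 2

lemma integral_gauss_cos {β : ℝ} (hβ : 0 < β) (r : ℝ) :
    ∫ u : ℝ, Real.exp (-β * u ^ 2) * Real.cos (r * u)
      = Real.sqrt (π / β) * Real.exp (-r ^ 2 / (4 * β)) := by
  have hb : (-(β:ℂ)).re < 0 := by simpa using hβ
  have hint := integrable_cexp_quadratic' hb ((r : ℂ) * Complex.I) 0
  have h := integral_cexp_quadratic hb ((r : ℂ) * Complex.I) 0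
  have hexp : ∀ u : ℝ, (-(β:ℂ) * (u:ℂ) ^ 2 + (r : ℂ) * Complex.I * (u:ℂ) + 0)
      = ((-β * u ^ 2 : ℝ) : ℂ) + ((r * u : ℝ) : ℂ) * Complex.I := by
    intro u; push_cast; ring
  have hre : ∀ u : ℝ, Real.exp (-β * u ^ 2) * Real.cos (r * u)
      = (Complex.exp (-(β:ℂ) * (u:ℂ) ^ 2 + (r : ℂ) * Complex.I * (u:ℂ) + 0)).re := by
    intro u
    rw [hexp u, Complex.exp_re]
    simp only [Complex.add_re, Complex.ofReal_re, Complex.mul_re, Complex.I_re,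
      Complex.ofReal_im, Complex.I_im, Complex.add_im, Complex.mul_im]
    norm_num
  calc ∫ u : ℝ, Real.exp (-β * u ^ 2) * Real.cos (r * u)
      = ∫ u : ℝ, (Complex.exp (-(β:ℂ) * (u:ℂ) ^ 2 + (r : ℂ) * Complex.I * (u:ℂ) + 0)).re := by
        simp_rw [hre]
    _ = (∫ u : ℝ, Complex.exp (-(β:ℂ) * (u:ℂ) ^ 2 + (r : ℂ) * Complex.I * (u:ℂ) + 0)).re := by
        exact (integral_re hint)
    _ = Real.sqrt (π / β) * Real.exp (-r ^ 2 / (4 * β)) := by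
        rw [h]
        have h2 : (0 : ℂ) - ((r : ℂ) * Complex.I) ^ 2 / (4 * -(β:ℂ))
            = ((-r ^ 2 / (4 * β) : ℝ) : ℂ) := by
          have hβ' : (β : ℂ) ≠ 0 := by exact_mod_cast hβ.ne'
          rw [mul_pow, Complex.I_sq]
          push_cast
          field_simp
          try ring
        have h3 : ((π : ℂ) / - -(β:ℂ)) ^ (1/2 : ℂ) = ((Real.sqrt (π / β) : ℝ) : ℂ) := by
          rw [neg_neg, Real.sqrt_eq_rpow, Complex.ofReal_cpow (by positivity : (0:ℝ) ≤ π / β)]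
          push_cast
          norm_num
        rw [h2, h3, ← Complex.ofReal_exp, ← Complex.ofReal_mul, Complex.ofReal_re]

noncomputable def KK (A u : ℝ) : ℝ :=
  Real.cosh (4 * π * Real.sqrt A * u) -
    (if A ≤ 1 then Real.cos (4 * π * Real.sqrt (1 - A) * u)
     else Real.cosh (4 * π * Real.sqrt (A - 1) * u))

lemma KK_sub_le {A : ℝ} (u : ℝ) :
    (if A ≤ 1 then Real.cos (4 * π * Real.sqrt (1 - A) * u)
     else Real.cosh (4 * π * Real.sqrt (A - 1) * u)) ≤ Real.cosh (4 * π * Real.sqrt A * u) := by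
  split_ifs with h
  · exact (Real.cos_le_one _).trans (Real.one_le_cosh _)
  · rw [Real.cosh_le_cosh]
    have h1 : Real.sqrt (A - 1) ≤ Real.sqrt A := Real.sqrt_le_sqrt (by linarith)
    have h2 : (0:ℝ) ≤ 4 * π * Real.sqrt (A - 1) := by positivity
    calc |4 * π * Real.sqrt (A - 1) * u| = 4 * π * Real.sqrt (A - 1) * |u| := by
          rw [abs_mul, abs_of_nonneg h2]
      _ ≤ 4 * π * Real.sqrt A * |u| := by
          refine mul_le_mul_of_nonneg_right ?_ (abs_nonneg u)
          have h3 : (0:ℝ) ≤ 4 * π := by positivity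
          exact mul_le_mul_of_nonneg_left h1 h3
      _ = |4 * π * Real.sqrt A * u| := by
          rw [abs_mul, abs_of_nonneg (by positivity : (0:ℝ) ≤ 4 * π * Real.sqrt A)]

lemma KK_nonneg (A u : ℝ) : 0 ≤ KK A u := sub_nonneg.2 (KK_sub_le u)

lemma KK_abs_le (A u : ℝ) : |KK A u| ≤ 2 * Real.cosh (4 * π * Real.sqrt A * u) := by
  rw [abs_of_nonneg (KK_nonneg A u)]
  unfold KK
  have h2 := KK_sub_le (A := A) u
  have h3 : -(Real.cosh (4 * π * Real.sqrt A * u)) ≤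
      (if A ≤ 1 then Real.cos (4 * π * Real.sqrt (1 - A) * u)
       else Real.cosh (4 * π * Real.sqrt (A - 1) * u)) := by
    split_ifs with h
    · have := Real.neg_one_le_cos (4 * π * Real.sqrt (1 - A) * u)
      have := Real.one_le_cosh (4 * π * Real.sqrt A * u)
      linarith
    · have h4 : (0:ℝ) < Real.cosh (4 * π * Real.sqrt (A - 1) * u) := Real.cosh_pos _
      have h5 : (0:ℝ) < Real.cosh (4 * π * Real.sqrt A * u) := Real.cosh_pos _
      linarith
  linarith

lemma KK_continuous (A : ℝ) : Continuous (KK A) := by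
  unfold KK
  by_cases h : A ≤ 1 <;> simp only [h, if_true, if_false] <;> fun_prop

lemma integral_KK {A β : ℝ} (hA : 0 ≤ A) (hβ : 0 < β) :
    ∫ u : ℝ, Real.exp (-β * u ^ 2) * KK A u
      = Real.sqrt (π / β) * (Real.exp (16 * π ^ 2 * A / (4 * β))
          - Real.exp (16 * π ^ 2 * (A - 1) / (4 * β))) := by
  have sq1 : (4 * π * Real.sqrt A) ^ 2 = 16 * π ^ 2 * A := by
    rw [mul_pow, mul_pow, Real.sq_sqrt hA]; ring
  have hcosh : ∫ u : ℝ, Real.exp (-β * u ^ 2) * Real.cosh (4 * π * Real.sqrt A * u)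
      = Real.sqrt (π / β) * Real.exp (16 * π ^ 2 * A / (4 * β)) := by
    rw [integral_gauss_cosh hβ, sq1]
  by_cases h : A ≤ 1
  · have sq2 : (4 * π * Real.sqrt (1 - A)) ^ 2 = 16 * π ^ 2 * (1 - A) := by
      rw [mul_pow, mul_pow, Real.sq_sqrt (by linarith)]; ring
    have hcos : ∫ u : ℝ, Real.exp (-β * u ^ 2) * Real.cos (4 * π * Real.sqrt (1 - A) * u)
        = Real.sqrt (π / β) * Real.exp (16 * π ^ 2 * (A - 1) / (4 * β)) := by
      rw [integral_gauss_cos hβ, sq2]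
      congr 2
      ring
    have hint1 : Integrable (fun u : ℝ =>
        Real.exp (-β * u ^ 2) * Real.cosh (4 * π * Real.sqrt A * u)) :=
      integrable_gauss_cosh hβ _
    have hint2 : Integrable (fun u : ℝ =>
        Real.exp (-β * u ^ 2) * Real.cos (4 * π * Real.sqrt (1 - A) * u)) := by
      refine (integrable_exp_neg_mul_sq hβ).mono' (Continuous.aestronglyMeasurable (by fun_prop)) ?_
      filter_upwards with u
      rw [Real.norm_eq_abs, abs_mul, abs_of_nonneg (Real.exp_pos _).le]
      exact mul_le_of_le_one_right (Real.exp_pos _).le (abs_cos_le_one _)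
    simp only [KK, h, if_true]
    simp_rw [mul_sub]
    rw [integral_sub hint1 hint2, hcosh, hcos, mul_sub]
  · have sq2 : (4 * π * Real.sqrt (A - 1)) ^ 2 = 16 * π ^ 2 * (A - 1) := by
      rw [mul_pow, mul_pow, Real.sq_sqrt (by linarith)]; ring
    have hcos : ∫ u : ℝ, Real.exp (-β * u ^ 2) * Real.cosh (4 * π * Real.sqrt (A - 1) * u)
        = Real.sqrt (π / β) * Real.exp (16 * π ^ 2 * (A - 1) / (4 * β)) := by
      rw [integral_gauss_cosh hβ, sq2]
    have hint1 : Integrable (fun u : ℝ =>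
        Real.exp (-β * u ^ 2) * Real.cosh (4 * π * Real.sqrt A * u)) :=
      integrable_gauss_cosh hβ _
    have hint2 : Integrable (fun u : ℝ =>
        Real.exp (-β * u ^ 2) * Real.cosh (4 * π * Real.sqrt (A - 1) * u)) :=
      integrable_gauss_cosh hβ _
    simp only [KK, h, if_false]
    simp_rw [mul_sub]
    rw [integral_sub hint1 hint2, hcosh, hcos, mul_sub]


lemma chiHat_comp (A h : ℝ) :
    (fun z : ℝ => chiHat A h (1 / Real.exp z)) = gg (2 * π * (h - A)) := by
  funext z
  unfold chiHat gg
  rw [one_div, ← Real.exp_neg, Real.rpow_def_of_pos (Real.exp_pos _), Real.log_exp,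
    ← Real.exp_add]
  congr 1
  ring

lemma chiVac_eq_integral {A : ℝ} (hA : 0 ≤ A) (z : ℝ) :
    chiVac A (Real.exp z) = ∫ u : ℝ, Real.sqrt 2 * KK A u * gg (2 * π * u ^ 2) z := by
  have hb : (0:ℝ) < 2 * π * Real.exp (-z) := by positivity
  have h1 : ∀ u : ℝ, Real.sqrt 2 * KK A u * gg (2 * π * u ^ 2) z
      = (Real.sqrt 2 * Real.exp (-(z/4)))
          * (Real.exp (-(2 * π * Real.exp (-z)) * u ^ 2) * KK A u) := by
    intro u
    unfold gg
    rw [show -(z/4) - 2 * π * u ^ 2 * Real.exp (-z)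
      = -(z/4) + -(2 * π * Real.exp (-z)) * u ^ 2 by ring, Real.exp_add]
    ring
  simp_rw [h1]
  rw [MeasureTheory.integral_const_mul, integral_KK hA hb]
  have e0 : Real.exp (-z) = (Real.exp z)⁻¹ := Real.exp_neg z
  have hez : Real.exp z ≠ 0 := (Real.exp_pos z).ne'
  have e1 : 16 * π ^ 2 * A / (4 * (2 * π * Real.exp (-z))) = 2 * π * Real.exp z * A := by
    rw [e0]; field_simp [Real.pi_ne_zero]; ring
  have e2 : 16 * π ^ 2 * (A - 1) / (4 * (2 * π * Real.exp (-z)))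
      = 2 * π * Real.exp z * (A - 1) := by
    rw [e0]; field_simp [Real.pi_ne_zero]; ring
  have e3 : Real.sqrt (π / (2 * π * Real.exp (-z))) = Real.exp (z/2) / Real.sqrt 2 := by
    rw [e0, show π / (2 * π * (Real.exp z)⁻¹) = Real.exp z / 2 by
      field_simp [Real.pi_ne_zero]]
    rw [Real.sqrt_div (Real.exp_pos z).le, ← Real.exp_half]
  rw [e1, e2, e3]
  have e4 : Real.exp (2 * π * Real.exp z * A) - Real.exp (2 * π * Real.exp z * (A - 1))
      = Real.exp (2 * π * Real.exp z * A) * (1 - Real.exp (-(2 * π * Real.exp z))) := by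
    rw [show 2 * π * Real.exp z * (A - 1) = 2 * π * Real.exp z * A + -(2 * π * Real.exp z) by ring,
      Real.exp_add]
    ring
  have e5 : (Real.exp z) ^ ((1:ℝ)/4) = Real.exp (z/4) := by
    rw [Real.rpow_def_of_pos (Real.exp_pos z), Real.log_exp]
    congr 1
    ring
  unfold chiVac
  rw [e5, e4]
  have hs2 : Real.sqrt 2 ≠ 0 := by positivity
  have e6 : Real.exp (z/4) = Real.exp (-(z/4)) * Real.exp (z/2) := by
    rw [← Real.exp_add]
    congr 1
    ring
  rw [e6]; field_simp
/-- The integrand family: `x` is the derivative variable, `u` the integration variable. -/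
noncomputable def FF (A : ℝ) (m : ℕ) (x u : ℝ) : ℝ :=
  Real.sqrt 2 * KK A u * ((Pm m).eval (2 * π * u ^ 2 * Real.exp (-x)) * gg (2 * π * u ^ 2) x)

lemma hasDerivAt_FF (A : ℝ) (m : ℕ) (u x : ℝ) :
    HasDerivAt (fun x => FF A m x u) (FF A (m+1) x u) x :=
  (hasDerivAt_gg m (2 * π * u ^ 2) x).const_mul (Real.sqrt 2 * KK A u)

lemma FF_cont (A : ℝ) (m : ℕ) (x : ℝ) : Continuous (fun u => FF A m x u) := by
  unfold FF gg
  exact (continuous_const.mul (KK_continuous A)).mul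
    (((Pm m).continuous.comp (by fun_prop)).mul (by fun_prop))

lemma integrable_poly_gauss_cosh (p : Polynomial ℝ) {β : ℝ} (hβ : 0 < β) (r : ℝ) :
    Integrable fun u : ℝ => p.eval u * (Real.exp (-β * u ^ 2) * Real.cosh (r * u)) := by
  have h1 : (fun u : ℝ => p.eval u * (Real.exp (-β * u ^ 2) * Real.cosh (r * u)))
      = fun u : ℝ => (p.eval u * Real.exp (-β * u ^ 2 + r * u)
          + p.eval u * Real.exp (-β * u ^ 2 + -r * u)) / 2 := by
    funext u
    rw [Real.cosh_eq, Real.exp_add, Real.exp_add]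
    ring_nf
  rw [h1]
  exact ((integrable_poly_gauss_exp p hβ r).add (integrable_poly_gauss_exp p hβ (-r))).div_const 2

lemma FF_bound (A : ℝ) (m : ℕ) : ∃ bnd : ℝ → ℝ, Integrable bnd ∧
    ∀ x : ℝ, |x| < 1 → ∀ u : ℝ, ‖FF A m x u‖ ≤ bnd u := by
  obtain ⟨C, hC0, hC⟩ := poly_bound (Pm m)
  set d := (Pm m).natDegree with hd
  set r := 4 * π * Real.sqrt A with hr
  set c0 := 2 * Real.sqrt 2 * C * 3 ^ d * Real.exp 1 with hc0
  have hc00 : 0 ≤ c0 := by positivity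
  set q0 : Polynomial ℝ := (1 + Polynomial.C (2 * π) * Polynomial.X ^ 2) ^ d with hq0
  have hq0eval : ∀ u : ℝ, q0.eval u = (1 + 2 * π * u ^ 2) ^ d := by
    intro u; simp [hq0]
  refine ⟨fun u => c0 * (q0.eval u * (Real.exp (-(2 * π / 3) * u ^ 2) * Real.cosh (r * u))),
    (integrable_poly_gauss_cosh q0 (by positivity) r).const_mul c0, ?_⟩
  intro x hx u
  have hxlt := (abs_lt.mp hx)
  have he3 : Real.exp 1 ≤ 3 := by
    have := Real.exp_one_lt_d9; linarith
  have hexm : Real.exp (-x) ≤ 3 := by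
    calc Real.exp (-x) ≤ Real.exp 1 := Real.exp_le_exp.2 (by linarith)
      _ ≤ 3 := he3
  have hexl : (1:ℝ)/3 ≤ Real.exp (-x) := by
    have h1 : Real.exp (-x) ≥ Real.exp (-1) := Real.exp_le_exp.2 (by linarith)
    have h2 : (1:ℝ)/3 ≤ Real.exp (-1) := by
      rw [Real.exp_neg]
      rw [div_le_iff₀ (by norm_num : (0:ℝ) < 3)]
      rw [inv_mul_eq_div, le_div_iff₀ (Real.exp_pos 1)]
      linarith
    linarith
  have hu2 : (0:ℝ) ≤ 2 * π * u ^ 2 := by positivity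
  -- bound on the polynomial factor
  have hP : |(Pm m).eval (2 * π * u ^ 2 * Real.exp (-x))| ≤ C * 3 ^ d * (1 + 2 * π * u ^ 2) ^ d := by
    refine (hC _).trans ?_
    rw [abs_of_nonneg (by positivity : (0:ℝ) ≤ 2 * π * u ^ 2 * Real.exp (-x))]
    have h1 : 1 + 2 * π * u ^ 2 * Real.exp (-x) ≤ 3 * (1 + 2 * π * u ^ 2) := by
      have : 2 * π * u ^ 2 * Real.exp (-x) ≤ 2 * π * u ^ 2 * 3 :=
        mul_le_mul_of_nonneg_left hexm hu2
      linarith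
    calc C * (1 + 2 * π * u ^ 2 * Real.exp (-x)) ^ d
        ≤ C * (3 * (1 + 2 * π * u ^ 2)) ^ d := by
          refine mul_le_mul_of_nonneg_left (pow_le_pow_left₀ (by positivity) h1 d) hC0
      _ = C * 3 ^ d * (1 + 2 * π * u ^ 2) ^ d := by rw [mul_pow]; ring
  -- bound on the exponential factor
  have hgg : gg (2 * π * u ^ 2) x ≤ Real.exp 1 * Real.exp (-(2 * π / 3) * u ^ 2) := by
    unfold gg
    rw [← Real.exp_add]
    refine Real.exp_le_exp.2 ?_
    have h1 : 2 * π * u ^ 2 * (1/3) ≤ 2 * π * u ^ 2 * Real.exp (-x) :=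
      mul_le_mul_of_nonneg_left hexl hu2
    have h2 : -(x/4) ≤ 1 := by linarith
    nlinarith
  have hgg0 : 0 < gg (2 * π * u ^ 2) x := Real.exp_pos _
  -- KK bound
  have hKK : |KK A u| ≤ 2 * Real.cosh (r * u) := KK_abs_le A u
  have hcosh0 : (0:ℝ) < Real.cosh (r * u) := Real.cosh_pos _
  -- assemble
  rw [Real.norm_eq_abs]
  unfold FF
  show _ ≤ c0 * (q0.eval u * (Real.exp (-(2 * π / 3) * u ^ 2) * Real.cosh (r * u)))
  rw [abs_mul, abs_mul, abs_mul, abs_of_nonneg (Real.sqrt_nonneg 2),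
    abs_of_nonneg hgg0.le, hq0eval u]
  calc Real.sqrt 2 * |KK A u| * (|(Pm m).eval (2 * π * u ^ 2 * Real.exp (-x))|
        * gg (2 * π * u ^ 2) x)
      ≤ Real.sqrt 2 * (2 * Real.cosh (r * u)) * ((C * 3 ^ d * (1 + 2 * π * u ^ 2) ^ d)
        * (Real.exp 1 * Real.exp (-(2 * π / 3) * u ^ 2))) := by
        refine mul_le_mul ?_ ?_ (by positivity) (by positivity)
        · exact mul_le_mul_of_nonneg_left hKK (Real.sqrt_nonneg 2)
        · exact mul_le_mul hP hgg hgg0.le (by positivity)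
    _ = c0 * ((1 + 2 * π * u ^ 2) ^ d * (Real.exp (-(2 * π / 3) * u ^ 2)
        * Real.cosh (r * u))) := by
        rw [hc0]; ring

lemma FF_integrable (A : ℝ) (m : ℕ) (x : ℝ) (hx : |x| < 1) :
    Integrable (fun u => FF A m x u) := by
  obtain ⟨bnd, bnd_int, hbnd⟩ := FF_bound A m
  exact bnd_int.mono' (FF_cont A m x).aestronglyMeasurable
    (Filter.Eventually.of_forall fun u => hbnd x hx u)

lemma interchange (A : ℝ) :
    ∀ m : ℕ, ∀ z : ℝ, |z| < 1 →
      iteratedDeriv m (fun x => ∫ u : ℝ, FF A 0 x u) z = ∫ u : ℝ, FF A m z u := by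
  intro m
  induction m with
  | zero => intro z hz; simp
  | succ m ih =>
    intro z hz
    rw [iteratedDeriv_succ]
    obtain ⟨bnd, bnd_int, hbnd⟩ := FF_bound A (m+1)
    have hε0 : 0 < 1 - |z| := by linarith
    have hball : ∀ x ∈ Metric.ball z (1 - |z|), |x| < 1 := by
      intro x hx
      rw [Metric.mem_ball, Real.dist_eq] at hx
      calc |x| = |x - z + z| := by ring_nf
        _ ≤ |x - z| + |z| := abs_add_le _ _
        _ < 1 := by linarith
    have key := hasDerivAt_integral_of_dominated_loc_of_deriv_le (μ := volume)
      (F := fun x u => FF A m x u) (F' := fun x u => FF A (m+1) x u) (bound := bnd)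
      (Metric.ball_mem_nhds z hε0)
      (Filter.Eventually.of_forall fun x => (FF_cont A m x).aestronglyMeasurable)
      (FF_integrable A m z hz)
      ((FF_cont A (m+1) z).aestronglyMeasurable)
      (Filter.Eventually.of_forall fun u x hx => hbnd x (hball x hx) u)
      bnd_int
      (Filter.Eventually.of_forall fun u x _ => hasDerivAt_FF A m u x)
    have heq : (iteratedDeriv m fun x => ∫ u : ℝ, FF A 0 x u)
        =ᶠ[nhds z] fun x => ∫ u : ℝ, FF A m x u := by
      have hmem : Metric.ball (0:ℝ) 1 ∈ nhds z := by
        refine Metric.isOpen_ball.mem_nhds ?_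
        rw [Metric.mem_ball, Real.dist_eq, sub_zero]
        exact hz
      filter_upwards [hmem] with x hx
      exact ih x (by rw [Metric.mem_ball, Real.dist_eq, sub_zero] at hx; exact hx)
    rw [heq.deriv_eq, key.2.deriv]

end NoUB

open NoUB in
/-- **No finite-order derivative functional can certify an upper bound on `g` when the
boundary gap is at most `(c−1)/24`.**
Let `c > 1`, `A = (c−1)/24` and `0 ≤ h* ≤ A`. If a derivative functional `ω` satisfies
`ω[t ↦ χ̂_h(1/t)] ≤ 0` for every `h ≥ h*`, then `ω[χ̂_vac] ≤ 0`; in particular `ω` cannot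
also satisfy the normalization `ω[χ̂_vac] = 1`. -/
theorem no_upper_bound_functional_below_threshold (c : ℝ) (hc : 1 < c)
    (hstar : ℝ) (h0 : 0 ≤ hstar) (hle : hstar ≤ (c - 1) / 24)
    (N : ℕ) (w : ℕ → ℝ)
    (hneg : ∀ h : ℝ, hstar ≤ h →
      derivFunctional N w (fun t => chiHat ((c - 1) / 24) h (1 / t)) ≤ 0) :
    derivFunctional N w (chiVac ((c - 1) / 24)) ≤ 0 := by
  set A : ℝ := (c - 1) / 24 with hA
  have hA0 : (0:ℝ) ≤ A := by rw [hA]; linarith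
  have hfun : (fun z : ℝ => chiVac A (Real.exp z)) = fun x => ∫ u : ℝ, FF A 0 x u := by
    funext z
    rw [chiVac_eq_integral hA0 z]
    congr 1
    funext u
    simp [FF, Pm]
  rw [derivFunctional]
  rw [show (fun z : ℝ => chiVac A (Real.exp z)) = fun x => ∫ u : ℝ, FF A 0 x u from hfun]
  have hid : ∀ m ∈ Finset.range (N+1),
      w m * iteratedDeriv m (fun x => ∫ u : ℝ, FF A 0 x u) 0 = w m * ∫ u : ℝ, FF A m 0 u :=
    fun m _ => by rw [interchange A m 0 (by norm_num)]
  rw [Finset.sum_congr rfl hid]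
  have hswap : ∑ m ∈ Finset.range (N+1), w m * ∫ u : ℝ, FF A m 0 u
      = ∫ u : ℝ, ∑ m ∈ Finset.range (N+1), w m * FF A m 0 u := by
    have h1 : ∀ m ∈ Finset.range (N+1), w m * ∫ u : ℝ, FF A m 0 u
        = ∫ u : ℝ, w m * FF A m 0 u :=
      fun m _ => (MeasureTheory.integral_const_mul (w m) _).symm
    rw [Finset.sum_congr rfl h1]
    exact (MeasureTheory.integral_finset_sum _ fun m _ =>
      (FF_integrable A m 0 (by norm_num)).const_mul (w m)).symm
  rw [hswap]
  refine MeasureTheory.integral_nonpos fun u => ?_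
  have hsum : ∑ m ∈ Finset.range (N+1), w m * FF A m 0 u
      = Real.sqrt 2 * KK A u
          * derivFunctional N w (fun t => chiHat A (A + u ^ 2) (1 / t)) := by
    rw [derivFunctional, Finset.mul_sum]
    refine Finset.sum_congr rfl fun m _ => ?_
    have hcomp : (fun z : ℝ => chiHat A (A + u ^ 2) (1 / Real.exp z)) = gg (2 * π * u ^ 2) := by
      rw [chiHat_comp]
      congr 1
      ring
    rw [hcomp, iteratedDeriv_gg m _ 0]
    simp only [FF, neg_zero, Real.exp_zero, mul_one]
    ring
  have h1 : derivFunctional N w (fun t => chiHat A (A + u ^ 2) (1 / t)) ≤ 0 :=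
    hneg _ (hle.trans (by nlinarith [sq_nonneg u]))
  have h2 : (0:ℝ) ≤ Real.sqrt 2 * KK A u :=
    mul_nonneg (Real.sqrt_nonneg 2) (KK_nonneg A u)
  calc ∑ m ∈ Finset.range (N+1), w m * FF A m 0 u
      = Real.sqrt 2 * KK A u * derivFunctional N w (fun t => chiHat A (A + u ^ 2) (1 / t)) :=
        hsum
    _ ≤ 0 := mul_nonpos_of_nonneg_of_nonpos h2 h1
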